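/- Fix p ∈ (0,1). Consider maximizing (1−k)θ² over pairs (k,θ) ∈ [0,1] × [0,1] satisfying the constraint k + (1−k)h(θ) = p. The maximum is attained uniquely at k = 0 and θ = h⁻¹(p); in particular, every feasible pair (k,θ) with k > 0 satisfies (1−k)θ² < (h⁻¹(p))². -/

import Mathlib

/-- `h(θ) = (1−θ)(1−log(1−θ))`; note that `Real.log 0 = 0` in Lean, so `h 1 = 0`
automatically, matching the convention `h(1) = 0`. -/
noncomputable def h (θ : ℝ) : ℝ := (1 - θ) * (1 - Real.log (1 - θ))

lemma h_zero : h 0 = 1 := by simp [h]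

lemma h_continuous : Continuous h := by
  have : h = fun θ => (1 - θ) - ((1 - θ) * Real.log (1 - θ)) := by
    funext θ; simp [h]; ring
  rw [this]
  exact (continuous_const.sub continuous_id).sub
    (Real.continuous_mul_log.comp (continuous_const.sub continuous_id))

lemma hasDerivAt_h {x : ℝ} (hx : x < 1) : HasDerivAt h (Real.log (1 - x)) x := by
  have h1 : (0:ℝ) < 1 - x := by linarith
  have d1 : HasDerivAt (fun t : ℝ => 1 - t) (-1) x := by
    simpa using (hasDerivAt_id x).const_sub 1
  have d2 : HasDerivAt (fun t : ℝ => Real.log (1 - t)) ((1 - x)⁻¹ * (-1)) x :=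
    (Real.hasDerivAt_log (ne_of_gt h1)).comp x d1
  have d3 : HasDerivAt (fun t : ℝ => 1 - Real.log (1 - t)) (-((1 - x)⁻¹ * (-1))) x :=
    d2.const_sub 1
  have d4 := d1.mul d3
  have : (-1) * (1 - Real.log (1 - x)) + (1 - x) * -((1 - x)⁻¹ * (-1))
      = Real.log (1 - x) := by field_simp; ring
  rw [this] at d4
  exact d4

lemma h_anti : StrictAntiOn h (Set.Icc 0 1) := by
  apply strictAntiOn_of_deriv_neg (convex_Icc 0 1) h_continuous.continuousOn
  intro x hx
  rw [interior_Icc] at hx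
  obtain ⟨hx1, hx2⟩ := hx
  rw [(hasDerivAt_h (by linarith)).deriv]
  exact Real.log_neg (by linarith) (by linarith)

lemma log_lower {u : ℝ} (h0 : 0 < u) (h1 : u < 1) : 1 - 1/u < Real.log u := by
  have := Real.log_lt_sub_one_of_pos (x := 1/u) (by positivity) (by
    intro hh
    have : u = 1 := by field_simp at hh; linarith
    linarith)
  rw [Real.log_div one_ne_zero (ne_of_gt h0), Real.log_one] at this
  linarith

/-- Auxiliary function `F θ = -θ log(1-θ) - 2(1 - h θ)`. -/
noncomputable def F (θ : ℝ) : ℝ := -θ * Real.log (1 - θ) - 2 * (1 - h θ)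

lemma hasDerivAt_F {x : ℝ} (hx : x < 1) :
    HasDerivAt F (Real.log (1 - x) + x / (1 - x)) x := by
  have h1 : (0:ℝ) < 1 - x := by linarith
  have d1 : HasDerivAt (fun t : ℝ => -t) (-1) x := (hasDerivAt_id x).neg
  have dd : HasDerivAt (fun t : ℝ => 1 - t) (-1) x := by
    simpa using (hasDerivAt_id x).const_sub 1
  have d2 : HasDerivAt (fun t : ℝ => Real.log (1 - t)) ((1 - x)⁻¹ * (-1)) x :=
    (Real.hasDerivAt_log (ne_of_gt h1)).comp x dd
  have d3 := d1.mul d2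
  have d4 : HasDerivAt (fun t : ℝ => 2 * (1 - h t)) (2 * -(Real.log (1 - x))) x :=
    ((hasDerivAt_h hx).const_sub 1).const_mul 2
  have d5 := d3.sub d4
  have : (-1) * Real.log (1 - x) + (-x) * ((1 - x)⁻¹ * (-1)) - 2 * -(Real.log (1 - x))
      = Real.log (1 - x) + x / (1 - x) := by field_simp; ring
  rw [this] at d5
  exact d5

lemma F_continuousOn {b : ℝ} (hb : b < 1) : ContinuousOn F (Set.Icc 0 b) := by
  apply ContinuousOn.sub
  · apply ContinuousOn.mul (continuous_neg.continuousOn)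
    apply ContinuousOn.log ((continuous_const.sub continuous_id).continuousOn)
    intro x hx
    have : x ≤ b := hx.2
    intro hh; simp at hh; linarith
  · exact (continuous_const.mul (continuous_const.sub h_continuous)).continuousOn

lemma F_zero : F 0 = 0 := by simp [F, h]

lemma F_pos {θ : ℝ} (h0 : 0 < θ) (h1 : θ < 1) : 0 < F θ := by
  have mono : StrictMonoOn F (Set.Icc 0 θ) := by
    apply strictMonoOn_of_deriv_pos (convex_Icc 0 θ) (F_continuousOn h1)
    intro x hx
    rw [interior_Icc] at hx
    have hx1 : x < 1 := lt_trans hx.2 h1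
    rw [(hasDerivAt_F hx1).deriv]
    have hu0 : (0:ℝ) < 1 - x := by linarith
    have hu1 : 1 - x < 1 := by linarith [hx.1]
    have hlog := log_lower hu0 hu1
    have : x / (1 - x) = 1 / (1 - x) - 1 := by field_simp; ring
    rw [this]
    linarith
  have := mono (Set.mem_Icc.2 ⟨le_refl 0, h0.le⟩) (Set.mem_Icc.2 ⟨h0.le, le_refl θ⟩) h0
  rw [F_zero] at this
  exact this

/-- Auxiliary function `G t = (1 - h t)/t²`. -/
noncomputable def G (t : ℝ) : ℝ := (1 - h t) / t ^ 2

lemma G_mono : StrictMonoOn G (Set.Ioc 0 1) := by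
  apply strictMonoOn_of_deriv_pos (convex_Ioc 0 1)
  · apply ContinuousOn.div (continuous_const.sub h_continuous).continuousOn
      (continuous_pow 2).continuousOn
    intro x hx
    exact pow_ne_zero 2 (ne_of_gt hx.1)
  · intro x hx
    rw [interior_Ioc] at hx
    have d1 : HasDerivAt (fun t : ℝ => 1 - h t) (-(Real.log (1 - x))) x :=
      (hasDerivAt_h hx.2).const_sub 1
    have d2 : HasDerivAt (fun t : ℝ => t ^ 2) (2 * x ^ 1) x := by
      simpa using hasDerivAt_pow 2 x
    have dG : HasDerivAt G
        ((-(Real.log (1 - x)) * x ^ 2 - (1 - h x) * (2 * x ^ 1)) / (x ^ 2) ^ 2) x :=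
      d1.div d2 (pow_ne_zero 2 (ne_of_gt hx.1))
    rw [dG.deriv]
    have key : -(Real.log (1 - x)) * x ^ 2 - (1 - h x) * (2 * x ^ 1) = x * F x := by
      simp [F]; ring
    rw [key]
    have := F_pos hx.1 hx.2
    have hx4 : (0:ℝ) < (x ^ 2) ^ 2 := pow_pos (pow_pos hx.1 2) 2
    exact div_pos (mul_pos hx.1 this) hx4

theorem stmt1 (p : ℝ) (hp : p ∈ Set.Ioo (0:ℝ) 1)
    (θp : ℝ) (hθp : θp ∈ Set.Icc (0:ℝ) 1) (hθph : h θp = p) :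
    ∀ k ∈ Set.Icc (0:ℝ) 1, ∀ θ ∈ Set.Icc (0:ℝ) 1,
      k + (1 - k) * h θ = p →
      (1 - k) * θ ^ 2 ≤ (1 - 0) * θp ^ 2 ∧
      ((k, θ) ≠ (0, θp) → (1 - k) * θ ^ 2 < θp ^ 2) := by
  obtain ⟨hp0, hp1⟩ := hp
  intro k hk θ hθ hcon
  -- θp ∈ (0,1)
  have hθp0 : 0 < θp := by
    rcases lt_or_eq_of_le hθp.1 with hh | hh
    · exact hh
    · exfalso; rw [← hh, h_zero] at hθph; linarith
  have hθp1 : θp < 1 := by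
    rcases lt_or_eq_of_le hθp.2 with hh | hh
    · exact hh
    · exfalso; rw [hh] at hθph; simp [h] at hθph; linarith
  -- k < 1
  have hk1 : k < 1 := by
    rcases lt_or_eq_of_le hk.2 with hh | hh
    · exact hh
    · exfalso; rw [hh] at hcon; simp at hcon; linarith
  have h1k : 0 < 1 - k := by linarith
  -- θ > 0
  have hθ0 : 0 < θ := by
    rcases lt_or_eq_of_le hθ.1 with hh | hh
    · exact hh
    · exfalso; rw [← hh, h_zero] at hcon; nlinarith
  -- (1-k)(1-hθ) = 1-p
  have e1 : (1 - k) * (1 - h θ) = 1 - p := by linear_combination -hcon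
  have e2 : k * (1 - h θ) = p - h θ := by linear_combination hcon
  have h1hθ : 0 < 1 - h θ := by
    by_contra hh
    push_neg at hh
    have : (1 - k) * (1 - h θ) ≤ 0 := mul_nonpos_of_nonneg_of_nonpos h1k.le hh
    linarith
  -- h θ ≤ h θp, hence θp ≤ θ
  have hθle : h θ ≤ h θp := by
    have : 0 ≤ k * (1 - h θ) := mul_nonneg hk.1 h1hθ.le
    rw [hθph]; linarith
  have hθpθ : θp ≤ θ := by
    by_contra hh
    push_neg at hh
    have := h_anti hθ (Set.mem_Icc.2 ⟨hθp0.le, hθp1.le⟩) hh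
    linarith
  have hθpI : θp ∈ Set.Ioc (0:ℝ) 1 := ⟨hθp0, hθp1.le⟩
  have hθI : θ ∈ Set.Ioc (0:ℝ) 1 := ⟨hθ0, hθ.2⟩
  have hGle : G θp ≤ G θ := G_mono.monotoneOn hθpI hθI hθpθ
  have hcross : (1 - h θp) * θ ^ 2 ≤ (1 - h θ) * θp ^ 2 := by
    unfold G at hGle
    rw [div_le_div_iff₀ (pow_pos hθp0 2) (pow_pos hθ0 2)] at hGle
    exact hGle
  have main : (1 - k) * θ ^ 2 ≤ θp ^ 2 := by
    have step : (1 - k) * θ ^ 2 * (1 - h θ) ≤ θp ^ 2 * (1 - h θ) := by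
      calc (1 - k) * θ ^ 2 * (1 - h θ) = ((1 - k) * (1 - h θ)) * θ ^ 2 := by ring
        _ = (1 - p) * θ ^ 2 := by rw [e1]
        _ = (1 - h θp) * θ ^ 2 := by rw [hθph]
        _ ≤ (1 - h θ) * θp ^ 2 := hcross
        _ = θp ^ 2 * (1 - h θ) := by ring
    exact le_of_mul_le_mul_right step h1hθ
  constructor
  · linarith
  · intro hne
    rcases lt_or_eq_of_le hk.1 with hk0 | hk0
    · -- k > 0 : strict
      have hθlt : h θ < h θp := by
        have : 0 < k * (1 - h θ) := mul_pos hk0 h1hθ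
        rw [hθph]; linarith
      have hθpθ' : θp < θ := by
        rcases lt_or_eq_of_le hθpθ with hh | hh
        · exact hh
        · exfalso; rw [hh] at hθlt; linarith
      have hGlt : G θp < G θ := G_mono hθpI hθI hθpθ'
      have hcross' : (1 - h θp) * θ ^ 2 < (1 - h θ) * θp ^ 2 := by
        unfold G at hGlt
        rw [div_lt_div_iff₀ (pow_pos hθp0 2) (pow_pos hθ0 2)] at hGlt
        exact hGlt
      have step : (1 - k) * θ ^ 2 * (1 - h θ) < θp ^ 2 * (1 - h θ) := by
        calc (1 - k) * θ ^ 2 * (1 - h θ) = ((1 - k) * (1 - h θ)) * θ ^ 2 := by ring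
          _ = (1 - p) * θ ^ 2 := by rw [e1]
          _ = (1 - h θp) * θ ^ 2 := by rw [hθph]
          _ < (1 - h θ) * θp ^ 2 := hcross'
          _ = θp ^ 2 * (1 - h θ) := by ring
      exact lt_of_mul_lt_mul_right step h1hθ.le
    · -- k = 0 : then θ = θp, contradicting hne
      exfalso
      rw [← hk0] at hcon
      have hhθ : h θ = h θp := by rw [hθph]; linarith
      have : θ = θp := h_anti.injOn (Set.mem_Icc.2 ⟨hθ0.le, hθ.2⟩)
        (Set.mem_Icc.2 ⟨hθp0.le, hθp1.le⟩) hhθ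
      exact hne (by rw [← hk0, this])
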